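/- Let A = (A_1,…,A_n) be a doubly stochastic n-tuple, and write each A_i in block form with respect to the orthogonal decomposition C^n = Im(A_i) ⊕ Ker(A_i), so the (1,1) block of A_i is positive definite and the other blocks vanish. Define the cone K_0 of admissible directions as the set of hermitian n-tuples (Z_1,…,Z_n) such that (A_1+εZ_1,…,A_n+εZ_n) is doubly stochastic for some ε > 0; let K_1 be the set of hermitian n-tuples (B_1,…,B_n) whose (2,2) blocks B_{i;2,2} are positive semidefinite with Im(B_{i;2,1}) ⊆ Im(B_{i;2,2}); let K_2 be the set of hermitian n-tuples whose (2,2) blocks are positive semidefinite; and let K_3 be the set of hermitian n-tuples (C_1,…,C_n) with tr(C_i) = 0 for all i and C_1+⋯+C_n = 0. Then: (1) K_0 = K_1 ∩ K_3; (2) the closure of K_1 equals K_2; (3) the closure of K_0 equals K_2 ∩ K_3. -/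

import Mathlib

open Matrix BigOperators Finset ComplexOrder Nat

/-- An `n`-tuple of hermitian matrices is doubly stochastic if each `A i` is positive
semidefinite, each has trace `1`, and they sum to the identity. -/
def DoublyStochasticTuple {n : ℕ} (A : Fin n → Matrix (Fin n) (Fin n) ℂ) : Prop :=
  (∀ i, (A i).PosSemidef) ∧ (∀ i, (A i).trace = 1) ∧ ∑ i, A i = 1

/-- A tuple consisting of hermitian matrices. -/
def HermitianTuple {n : ℕ} (B : Fin n → Matrix (Fin n) (Fin n) ℂ) : Prop :=
  ∀ i, (B i).IsHermitian

/-- The cone `K₀` of admissible directions at `A`: hermitian tuples `Z` such that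
`A + εZ` is doubly stochastic for some `ε > 0`. -/
def K0 {n : ℕ} (A : Fin n → Matrix (Fin n) (Fin n) ℂ) :
    Set (Fin n → Matrix (Fin n) (Fin n) ℂ) :=
  {Z | HermitianTuple Z ∧ ∃ ε : ℝ, 0 < ε ∧
    DoublyStochasticTuple (fun i => A i + (ε : ℂ) • Z i)}

/-- The cone `K₁`, expressed via the orthogonal projections `π i` onto `Ker (A i)`:
hermitian tuples `B` whose `(2,2)` blocks `π i * B i * π i` (the compressions to `Ker (A i)`)
are positive semidefinite and whose `(2,1)` blocks `π i * B i * (1 - π i)` have range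
contained in the range of the `(2,2)` block. -/
def K1 {n : ℕ} (π : Fin n → Matrix (Fin n) (Fin n) ℂ) :
    Set (Fin n → Matrix (Fin n) (Fin n) ℂ) :=
  {B | HermitianTuple B ∧ ∀ i, (π i * B i * π i).PosSemidef ∧
    LinearMap.range (π i * B i * (1 - π i)).mulVecLin ≤
      LinearMap.range (π i * B i * π i).mulVecLin}

/-- The cone `K₂`: hermitian tuples `B` whose `(2,2)` blocks `π i * B i * π i` are positive
semidefinite. -/
def K2 {n : ℕ} (π : Fin n → Matrix (Fin n) (Fin n) ℂ) :
    Set (Fin n → Matrix (Fin n) (Fin n) ℂ) :=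
  {B | HermitianTuple B ∧ ∀ i, (π i * B i * π i).PosSemidef}

/-- The linear subspace `K₃`: hermitian tuples with traceless entries summing to zero. -/
def K3 {n : ℕ} : Set (Fin n → Matrix (Fin n) (Fin n) ℂ) :=
  {C | HermitianTuple C ∧ (∀ i, (C i).trace = 0) ∧ ∑ i, C i = 0}

variable {n : ℕ}

/-- `star (P *ᵥ x) ⬝ᵥ Q *ᵥ y = star x ⬝ᵥ (Pᴴ * Q) *ᵥ y`. -/
lemma dot_conj (P Q : Matrix (Fin n) (Fin n) ℂ) (x y : Fin n → ℂ) :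
    star (P *ᵥ x) ⬝ᵥ Q *ᵥ y = star x ⬝ᵥ (Pᴴ * Q) *ᵥ y := by
  rw [star_mulVec, ← dotProduct_mulVec, mulVec_mulVec]

lemma dot_conj2 (P R : Matrix (Fin n) (Fin n) ℂ) (x : Fin n → ℂ) :
    star (P *ᵥ x) ⬝ᵥ R *ᵥ (P *ᵥ x) = star x ⬝ᵥ (Pᴴ * R * P) *ᵥ x := by
  rw [dot_conj, mulVec_mulVec, Matrix.mul_assoc]

lemma dot_ct (P : Matrix (Fin n) (Fin n) ℂ) (x y : Fin n → ℂ) :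
    star x ⬝ᵥ Pᴴ *ᵥ y = star (star y ⬝ᵥ P *ᵥ x) := by
  rw [star_dotProduct]
  congr 1
  rw [star_mulVec, conjTranspose_conjTranspose, ← dotProduct_mulVec]

lemma herm_dot_star {M : Matrix (Fin n) (Fin n) ℂ} (hM : M.IsHermitian) (x : Fin n → ℂ) :
    star (star x ⬝ᵥ M *ᵥ x) = star x ⬝ᵥ M *ᵥ x := by
  conv_rhs => rw [← hM.eq]
  rw [dot_ct]

lemma herm_dot_im {M : Matrix (Fin n) (Fin n) ℂ} (hM : M.IsHermitian) (x : Fin n → ℂ) :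
    (star x ⬝ᵥ M *ᵥ x).im = 0 := by
  have := herm_dot_star hM x
  have h2 := congrArg Complex.im this
  simp only [Complex.star_def, Complex.conj_im] at h2
  linarith

lemma herm_nonneg_iff {M : Matrix (Fin n) (Fin n) ℂ} (hM : M.IsHermitian) (x : Fin n → ℂ) :
    0 ≤ star x ⬝ᵥ M *ᵥ x ↔ 0 ≤ (star x ⬝ᵥ M *ᵥ x).re := by
  rw [Complex.le_def]
  simp [herm_dot_im hM x]


noncomputable def eqv : (Fin n → ℂ) ≃ EuclideanSpace ℂ (Fin n) := (WithLp.equiv 2 (Fin n → ℂ)).symm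

lemma dot_self_re (u : Fin n → ℂ) : (star u ⬝ᵥ u).re = ‖eqv u‖ ^ 2 := by
  have h : (inner ℂ (eqv u) (eqv u) : ℂ) = star u ⬝ᵥ u :=
    (EuclideanSpace.inner_toLp_toLp u u).trans (dotProduct_comm _ _)
  have h2 := inner_self_eq_norm_sq (𝕜 := ℂ) (eqv u)
  rw [h] at h2
  simpa using h2

lemma dot_self_nonneg (u : Fin n → ℂ) : 0 ≤ (star u ⬝ᵥ u).re := by
  rw [dot_self_re]; positivity

/-- B1: entry bound via operator norm. -/
lemma exists_quad_bound (N : Matrix (Fin n) (Fin n) ℂ) :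
    ∃ K : ℝ, 0 ≤ K ∧ ∀ x : Fin n → ℂ, ‖star x ⬝ᵥ N *ᵥ x‖ ≤ K * (star x ⬝ᵥ x).re := by
  let f := (Matrix.toEuclideanLin N).toContinuousLinearMap
  refine ⟨‖f‖, norm_nonneg _, fun x => ?_⟩
  have hfx : f (eqv x) = eqv (N *ᵥ x) := by
    show Matrix.toEuclideanLin N (eqv x) = eqv (N *ᵥ x)
    exact Matrix.toEuclideanLin_apply_piLp_toLp N x
  have h1 : (inner ℂ (eqv x) (eqv (N *ᵥ x)) : ℂ) = star x ⬝ᵥ N *ᵥ x :=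
    (EuclideanSpace.inner_toLp_toLp x (N *ᵥ x)).trans (dotProduct_comm _ _)
  calc ‖star x ⬝ᵥ N *ᵥ x‖ = ‖(inner ℂ (eqv x) (f (eqv x)) : ℂ)‖ := by rw [hfx, h1]
    _ ≤ ‖eqv x‖ * ‖f (eqv x)‖ := norm_inner_le_norm _ _
    _ ≤ ‖eqv x‖ * (‖f‖ * ‖eqv x‖) := by
        gcongr; exact f.le_opNorm _
    _ = ‖f‖ * (star x ⬝ᵥ x).re := by rw [dot_self_re]; ring

lemma psd_exists_ct_mul_self {M : Matrix (Fin n) (Fin n) ℂ} (hM : M.PosSemidef) :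
    ∃ S : Matrix (Fin n) (Fin n) ℂ, M = Sᴴ * S := by
  classical
  open scoped MatrixOrder Matrix.Norms.L2Operator in
  obtain ⟨B, hB⟩ := CStarAlgebra.nonneg_iff_eq_star_mul_self.mp hM.nonneg
  exact ⟨B, hB⟩

/-- B2: coercivity of a positive definite matrix. -/
lemma exists_coercive {B : Matrix (Fin n) (Fin n) ℂ} (hB : B.PosDef) :
    ∃ c : ℝ, 0 < c ∧ ∀ x : Fin n → ℂ, c * (star x ⬝ᵥ x).re ≤ (star x ⬝ᵥ B *ᵥ x).re := by
  classical
  obtain ⟨S, hS⟩ := psd_exists_ct_mul_self hB.posSemidef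
  -- B = Sᴴ * S; S is invertible since det B ≠ 0
  have hdet : B.det ≠ 0 := hB.det_pos.ne'
  have hSdet : S.det ≠ 0 := by
    intro h
    rw [hS, Matrix.det_mul, h, mul_zero] at hdet
    exact hdet rfl
  let g := (Matrix.toEuclideanLin S⁻¹).toContinuousLinearMap
  set m : ℝ := max ‖g‖ 1 with hm
  have hm1 : 1 ≤ m := le_max_right _ _
  have hm0 : 0 < m := lt_of_lt_of_le one_pos hm1
  refine ⟨m⁻¹ ^ 2, by positivity, fun x => ?_⟩
  have hqB : (star x ⬝ᵥ B *ᵥ x) = star (S *ᵥ x) ⬝ᵥ (S *ᵥ x) := by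
    rw [hS, ← dot_conj]
  have key : ‖eqv x‖ ≤ m * ‖eqv (S *ᵥ x)‖ := by
    have hx : S⁻¹ *ᵥ (S *ᵥ x) = x := by
      rw [mulVec_mulVec, Matrix.nonsing_inv_mul S hSdet.isUnit, one_mulVec]
    have hgx : g (eqv (S *ᵥ x)) = eqv x := by
      have h' := Matrix.toEuclideanLin_apply_piLp_toLp (𝕜 := ℂ) S⁻¹ (S *ᵥ x)
      show Matrix.toEuclideanLin S⁻¹ (eqv (S *ᵥ x)) = eqv x
      unfold eqv
      exact h'.trans (congrArg (WithLp.toLp 2) hx)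
    calc ‖eqv x‖ = ‖g (eqv (S *ᵥ x))‖ := by rw [hgx]
      _ ≤ ‖g‖ * ‖eqv (S *ᵥ x)‖ := g.le_opNorm _
      _ ≤ m * ‖eqv (S *ᵥ x)‖ := by gcongr; exact le_max_left _ _
  have h1 : (star x ⬝ᵥ x).re ≤ m ^ 2 * (star (S *ᵥ x) ⬝ᵥ (S *ᵥ x)).re := by
    rw [dot_self_re, dot_self_re]
    calc ‖eqv x‖ ^ 2 ≤ (m * ‖eqv (S *ᵥ x)‖) ^ 2 :=
          pow_le_pow_left₀ (norm_nonneg _) key 2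
      _ = m ^ 2 * ‖eqv (S *ᵥ x)‖ ^ 2 := by ring
  rw [hqB]
  calc m⁻¹ ^ 2 * (star x ⬝ᵥ x).re
      ≤ m⁻¹ ^ 2 * (m ^ 2 * (star (S *ᵥ x) ⬝ᵥ (S *ᵥ x)).re) :=
        mul_le_mul_of_nonneg_left h1 (by positivity)
    _ = (star (S *ᵥ x) ⬝ᵥ (S *ᵥ x)).re := by
        field_simp


lemma psd_smul {M : Matrix (Fin n) (Fin n) ℂ} (h : M.PosSemidef) {r : ℝ} (hr : 0 ≤ r) :
    ((r : ℂ) • M).PosSemidef := by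
  refine PosSemidef.of_dotProduct_mulVec_nonneg ?_ ?_
  · unfold Matrix.IsHermitian
    rw [conjTranspose_smul, h.1.eq]
    congr 1
    simp [Complex.star_def, Complex.conj_ofReal]
  · intro x
    rw [smul_mulVec, dotProduct_smul]
    have h0 : (0:ℂ) ≤ (r:ℂ) := by
      rw [Complex.zero_le_real]
      exact hr
    exact mul_nonneg h0 (h.dotProduct_mulVec_nonneg x)

lemma range_ct_mul_self (D : Matrix (Fin n) (Fin n) ℂ) :
    LinearMap.range (Dᴴ * D).mulVecLin = LinearMap.range Dᴴ.mulVecLin := by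
  apply Submodule.eq_of_le_of_finrank_le
  · rw [Matrix.mulVecLin_mul]
    exact LinearMap.range_comp_le_range _ _
  · show (Dᴴ).rank ≤ (Dᴴ * D).rank
    rw [Matrix.rank_conjTranspose_mul_self, Matrix.rank_conjTranspose]

/-- range of `π M ρ` is inside range of `π M π` for `M` PSD, `π` hermitian. -/
lemma psd_range_le {M : Matrix (Fin n) (Fin n) ℂ} (hM : M.PosSemidef)
    {π : Matrix (Fin n) (Fin n) ℂ} (hπ : π.IsHermitian) (ρ : Matrix (Fin n) (Fin n) ℂ) :
    LinearMap.range (π * M * ρ).mulVecLin ≤ LinearMap.range (π * M * π).mulVecLin := by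
  obtain ⟨C, hC⟩ := psd_exists_ct_mul_self hM
  have h1 : π * M * ρ = (C * π)ᴴ * (C * ρ) := by
    rw [hC, conjTranspose_mul, hπ.eq]
    simp [Matrix.mul_assoc]
  have h2 : π * M * π = (C * π)ᴴ * (C * π) := by
    rw [hC, conjTranspose_mul, hπ.eq]
    simp [Matrix.mul_assoc]
  rw [h1, h2, range_ct_mul_self]
  rw [Matrix.mulVecLin_mul]
  exact LinearMap.range_comp_le_range _ _

/-- factor through: if range N ≤ range M then N = M * W for some W. -/
lemma exists_factor {M N : Matrix (Fin n) (Fin n) ℂ}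
    (h : LinearMap.range N.mulVecLin ≤ LinearMap.range M.mulVecLin) :
    ∃ W : Matrix (Fin n) (Fin n) ℂ, M * W = N := by
  obtain ⟨ℓ, hℓ⟩ := Module.projective_lifting_property
    (M.mulVecLin.rangeRestrict)
    (N.mulVecLin.codRestrict (LinearMap.range M.mulVecLin) (fun c => h (LinearMap.mem_range_self _ c)))
    (LinearMap.surjective_rangeRestrict _)
  refine ⟨LinearMap.toMatrix' ℓ, ?_⟩
  apply Matrix.toLin'.injective
  rw [Matrix.toLin'_mul, Matrix.toLin'_toMatrix', Matrix.toLin'_apply', Matrix.toLin'_apply']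
  apply LinearMap.ext
  intro x
  have h2 := congrArg (fun f => ((f : (Fin n → ℂ) →ₗ[ℂ] LinearMap.range M.mulVecLin) x : Fin n → ℂ)) hℓ
  simpa using h2

lemma herm_real_smul {Z : Matrix (Fin n) (Fin n) ℂ} (hZ : Z.IsHermitian) (r : ℝ) :
    ((r : ℂ) • Z).IsHermitian := by
  unfold Matrix.IsHermitian
  rw [conjTranspose_smul, hZ.eq]
  congr 1
  simp [Complex.star_def, Complex.conj_ofReal]

lemma key_eps {A π Z : Matrix (Fin n) (Fin n) ℂ}
    (hAps : A.PosSemidef) (hπh : π.IsHermitian) (hπ2 : π * π = π) (hAπ : A * π = 0)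
    (hpd : (A + π).PosDef) (hZ : Z.IsHermitian)
    (hM : (π * Z * π).PosSemidef)
    (hr : LinearMap.range (π * Z * (1 - π)).mulVecLin ≤
      LinearMap.range (π * Z * π).mulVecLin) :
    ∃ ε : ℝ, 0 < ε ∧ ∀ δ : ℝ, 0 < δ → δ ≤ ε → (A + (δ : ℂ) • Z).PosSemidef := by
  have hπA : π * A = 0 := by
    have h := congrArg conjTranspose hAπ
    simpa [conjTranspose_mul, hπh.eq, hAps.1.eq] using h
  have h1π : (1 - π) * (1 - π) = 1 - π := by
    have e : (1 - π) * (1 - π) = 1 - π - π + π * π := by noncomm_ring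
    rw [e, hπ2]
    abel
  have hπ1h : (1 - π).IsHermitian := (Matrix.isHermitian_one).sub hπh
  set M : Matrix (Fin n) (Fin n) ℂ := π * Z * π with hMdef
  obtain ⟨W0, hW0⟩ := exists_factor hr
  set W : Matrix (Fin n) (Fin n) ℂ := W0 * (1 - π) with hWdef
  have hMW : M * W = π * Z * (1 - π) := by
    rw [hWdef, ← Matrix.mul_assoc, hW0, Matrix.mul_assoc (π * Z), h1π]
  set N3 : Matrix (Fin n) (Fin n) ℂ := W0ᴴ * M * W0 with hN3def
  obtain ⟨c, hc, hcb⟩ := exists_coercive hpd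
  obtain ⟨K1b, hK1b, hK1⟩ := exists_quad_bound Z
  obtain ⟨K2b, hK2b, hK2⟩ := exists_quad_bound N3
  refine ⟨c / (K1b + K2b + 1), by positivity, fun δ hδ0 hδε => ?_⟩
  have hherm : (A + (δ : ℂ) • Z).IsHermitian := hAps.1.add (herm_real_smul hZ δ)
  refine PosSemidef.of_dotProduct_mulVec_nonneg hherm fun x => ?_
  rw [herm_nonneg_iff hherm]
  set u : Fin n → ℂ := (1 - π) *ᵥ x with hu
  set w : Fin n → ℂ := W *ᵥ x with hw
  have hwu : w = W0 *ᵥ u := by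
    rw [hu, hw, hWdef, mulVec_mulVec]
  -- identity for A
  have eqA : star x ⬝ᵥ A *ᵥ x = star u ⬝ᵥ (A + π) *ᵥ u := by
    have e1 : (A + π) * (1 - π) = A := by
      rw [Matrix.mul_sub, Matrix.mul_one, Matrix.add_mul, hAπ, hπ2]
      simp
    have e2 : (1 - π) * A = A := by
      rw [Matrix.sub_mul, Matrix.one_mul, hπA, sub_zero]
    rw [hu, dot_conj2, hπ1h.eq, Matrix.mul_assoc, e1, e2]
  -- decomposition of Z
  have hdec : Z = (1 - π) * Z * (1 - π) + M + M * W + (M * W)ᴴ := by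
    have h4 : (M * W)ᴴ = (1 - π) * Z * π := by
      rw [hMW, conjTranspose_mul, conjTranspose_mul, hZ.eq, hπh.eq, hπ1h.eq, ← Matrix.mul_assoc]
    rw [h4, hMW, hMdef]
    have expand : ((1 - π) + π) * Z * ((1 - π) + π) = Z := by simp
    calc Z = ((1 - π) + π) * Z * ((1 - π) + π) := expand.symm
      _ = (1 - π) * Z * (1 - π) + π * Z * π + π * Z * (1 - π) + (1 - π) * Z * π := by
          noncomm_ring
  have eqZ : star x ⬝ᵥ Z *ᵥ x
      = star u ⬝ᵥ Z *ᵥ u + star x ⬝ᵥ M *ᵥ x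
        + (star x ⬝ᵥ M *ᵥ w + star (star x ⬝ᵥ M *ᵥ w)) := by
    have t1 : star u ⬝ᵥ Z *ᵥ u = star x ⬝ᵥ ((1 - π) * Z * (1 - π)) *ᵥ x := by
      rw [hu, dot_conj2, hπ1h.eq]
    have t3 : star x ⬝ᵥ (M * W) *ᵥ x = star x ⬝ᵥ M *ᵥ w := by
      rw [hw, mulVec_mulVec]
    have t4 : star x ⬝ᵥ (M * W)ᴴ *ᵥ x = star (star x ⬝ᵥ (M * W) *ᵥ x) := by
      rw [dot_ct]
    conv_lhs => rw [hdec]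
    rw [add_mulVec, add_mulVec, add_mulVec, dotProduct_add, dotProduct_add, dotProduct_add,
      t1, t3, t4, t3]
    ring
  -- PSD facts
  have hMx : 0 ≤ (star x ⬝ᵥ M *ᵥ x).re := by
    have := hM.dotProduct_mulVec_nonneg x
    rwa [herm_nonneg_iff hM.1] at this
  have hsum : 0 ≤ (star (x + w) ⬝ᵥ M *ᵥ (x + w)).re := by
    have := hM.dotProduct_mulVec_nonneg (x + w)
    rwa [herm_nonneg_iff hM.1] at this
  have hexp : star (x + w) ⬝ᵥ M *ᵥ (x + w)
      = star x ⬝ᵥ M *ᵥ x + (star x ⬝ᵥ M *ᵥ w + star (star x ⬝ᵥ M *ᵥ w))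
        + star w ⬝ᵥ M *ᵥ w := by
    have t5 : star w ⬝ᵥ M *ᵥ x = star (star x ⬝ᵥ M *ᵥ w) := by
      conv_lhs => rw [← hM.1.eq]
      rw [dot_ct]
    rw [star_add, add_dotProduct, mulVec_add, dotProduct_add, dotProduct_add, t5]
    ring
  have hmww : star w ⬝ᵥ M *ᵥ w = star u ⬝ᵥ N3 *ᵥ u := by
    rw [hwu, dot_conj2, hN3def]
  -- real quantities
  set ru : ℝ := (star u ⬝ᵥ u).re with hru
  have hru0 : 0 ≤ ru := dot_self_nonneg u
  have bA : c * ru ≤ (star u ⬝ᵥ (A + π) *ᵥ u).re := hcb u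
  have bZu : -(K1b * ru) ≤ (star u ⬝ᵥ Z *ᵥ u).re := by
    have h := hK1 u
    have h2 : |(star u ⬝ᵥ Z *ᵥ u).re| ≤ ‖star u ⬝ᵥ Z *ᵥ u‖ := Complex.abs_re_le_norm _
    have := abs_le.mp (le_trans h2 h)
    linarith [this.1]
  have bN3u : (star u ⬝ᵥ N3 *ᵥ u).re ≤ K2b * ru := by
    have h := hK2 u
    have h2 : |(star u ⬝ᵥ N3 *ᵥ u).re| ≤ ‖star u ⬝ᵥ N3 *ᵥ u‖ := Complex.abs_re_le_norm _
    have := abs_le.mp (le_trans h2 h)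
    linarith [this.2]
  -- assemble
  have hsplit : (star x ⬝ᵥ (A + (δ : ℂ) • Z) *ᵥ x).re
      = (star x ⬝ᵥ A *ᵥ x).re + δ * (star x ⬝ᵥ Z *ᵥ x).re := by
    rw [add_mulVec, dotProduct_add, smul_mulVec, dotProduct_smul]
    simp [Complex.add_re, Complex.smul_re]
  rw [hsplit, eqA, eqZ]
  set t : ℝ := (star x ⬝ᵥ M *ᵥ w).re with ht
  have hre1 : (star u ⬝ᵥ Z *ᵥ u + star x ⬝ᵥ M *ᵥ x
      + (star x ⬝ᵥ M *ᵥ w + star (star x ⬝ᵥ M *ᵥ w))).re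
      = (star u ⬝ᵥ Z *ᵥ u).re + (star x ⬝ᵥ M *ᵥ x).re + 2 * t := by
    simp [Complex.add_re, ht]
    ring
  rw [hre1]
  have hre2 : (star x ⬝ᵥ M *ᵥ x).re + 2 * t + (star u ⬝ᵥ N3 *ᵥ u).re ≥ 0 := by
    have := hsum
    rw [hexp] at this
    have e : (star x ⬝ᵥ M *ᵥ x + (star x ⬝ᵥ M *ᵥ w + star (star x ⬝ᵥ M *ᵥ w))
        + star w ⬝ᵥ M *ᵥ w).re
        = (star x ⬝ᵥ M *ᵥ x).re + 2 * t + (star u ⬝ᵥ N3 *ᵥ u).re := by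
      rw [← hmww]
      simp [Complex.add_re, ht]
      ring
    rw [e] at this
    linarith
  have hδc : δ * (K1b + K2b) ≤ c := by
    have h1 : δ * (K1b + K2b) ≤ c / (K1b + K2b + 1) * (K1b + K2b) :=
      mul_le_mul_of_nonneg_right hδε (by linarith)
    have h2 : c / (K1b + K2b + 1) * (K1b + K2b) ≤ c := by
      rw [div_mul_eq_mul_div, div_le_iff₀ (by positivity)]
      nlinarith
    linarith
  nlinarith [mul_le_mul_of_nonneg_left bZu (le_of_lt hδ0),
    mul_le_mul_of_nonneg_left bN3u (le_of_lt hδ0),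
    mul_le_mul_of_nonneg_left hre2 (le_of_lt hδ0),
    mul_le_mul_of_nonneg_right hδc hru0,
    mul_nonneg (le_of_lt hδ0) hMx]

lemma proj_psd {π : Matrix (Fin n) (Fin n) ℂ} (hπh : π.IsHermitian) (hπ2 : π * π = π) :
    π.PosSemidef := by
  have h : π = πᴴ * π := by rw [hπh.eq, hπ2]
  rw [h]
  exact posSemidef_conjTranspose_mul_self π

lemma quad_proj {π : Matrix (Fin n) (Fin n) ℂ} (hπh : π.IsHermitian) (hπ2 : π * π = π)
    (x : Fin n → ℂ) : star x ⬝ᵥ π *ᵥ x = star (π *ᵥ x) ⬝ᵥ (π *ᵥ x) := by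
  rw [dot_conj π π x x, hπh.eq, hπ2]

lemma range_proj_le {π B : Matrix (Fin n) (Fin n) ℂ} (hπh : π.IsHermitian) (hπ2 : π * π = π)
    (hBpsd : (π * B * π).PosSemidef) {t : ℝ} (ht : 0 < t) :
    LinearMap.range π.mulVecLin ≤
      LinearMap.range (π * B * π + (t : ℂ) • π).mulVecLin := by
  have h1π2 : (1 - π) * (1 - π) = 1 - π := by
    have e : (1 - π) * (1 - π) = 1 - π - π + π * π := by noncomm_ring
    rw [e, hπ2]; abel
  have hπ1h : (1 - π).IsHermitian := (Matrix.isHermitian_one).sub hπh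
  set M : Matrix (Fin n) (Fin n) ℂ := π * B * π + (t : ℂ) • π with hMdef
  set M' : Matrix (Fin n) (Fin n) ℂ := M + (1 - π) with hM'def
  have hM'h : M'.IsHermitian := (hBpsd.1.add (herm_real_smul (proj_psd hπh hπ2).1 t)).add hπ1h
  have hM'pd : M'.PosDef := by
    refine PosDef.of_dotProduct_mulVec_pos hM'h fun x hx => ?_
    have hq : star x ⬝ᵥ M' *ᵥ x
        = star x ⬝ᵥ (π * B * π) *ᵥ x + (t : ℂ) * (star (π *ᵥ x) ⬝ᵥ (π *ᵥ x))
          + star ((1 - π) *ᵥ x) ⬝ᵥ ((1 - π) *ᵥ x) := by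
      rw [hM'def, hMdef, add_mulVec, add_mulVec, dotProduct_add, dotProduct_add,
        smul_mulVec, dotProduct_smul, quad_proj hπh hπ2, quad_proj hπ1h h1π2]
      simp [smul_eq_mul]
    rw [hq]
    rcases eq_or_ne (π *ᵥ x) 0 with hπx | hπx
    · have hx1 : (1 - π) *ᵥ x ≠ 0 := by
        intro h0
        apply hx
        have : x = π *ᵥ x + (1 - π) *ᵥ x := by
          rw [← add_mulVec]
          simp
        rw [this, hπx, h0, add_zero]
      have h3 : 0 < star ((1 - π) *ᵥ x) ⬝ᵥ ((1 - π) *ᵥ x) :=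
        dotProduct_star_self_pos_iff.mpr hx1
      have h1 : 0 ≤ star x ⬝ᵥ (π * B * π) *ᵥ x := hBpsd.dotProduct_mulVec_nonneg x
      have h2 : (0:ℂ) ≤ (t : ℂ) * (star (π *ᵥ x) ⬝ᵥ (π *ᵥ x)) :=
        mul_nonneg (by rw [Complex.zero_le_real]; exact le_of_lt ht)
          (dotProduct_star_self_nonneg _)
      calc (0:ℂ) < star ((1 - π) *ᵥ x) ⬝ᵥ ((1 - π) *ᵥ x) := h3
        _ ≤ _ := by
          have := add_le_add (add_le_add h1 h2) (le_refl (star ((1 - π) *ᵥ x) ⬝ᵥ ((1 - π) *ᵥ x)))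
          simpa using this
    · have h3 : 0 ≤ star ((1 - π) *ᵥ x) ⬝ᵥ ((1 - π) *ᵥ x) :=
        dotProduct_star_self_nonneg _
      have h1 : 0 ≤ star x ⬝ᵥ (π * B * π) *ᵥ x := hBpsd.dotProduct_mulVec_nonneg x
      have h2 : (0:ℂ) < (t : ℂ) * (star (π *ᵥ x) ⬝ᵥ (π *ᵥ x)) :=
        mul_pos (by rw [Complex.zero_lt_real]; exact ht)
          (dotProduct_star_self_pos_iff.mpr hπx)
      calc (0:ℂ) < (t : ℂ) * (star (π *ᵥ x) ⬝ᵥ (π *ᵥ x)) := h2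
        _ ≤ _ := by
          have := add_le_add (add_le_add h1 (le_refl ((t : ℂ) * (star (π *ᵥ x) ⬝ᵥ (π *ᵥ x))))) h3
          simpa using this
  have hdet : IsUnit M'.det := (Matrix.isUnit_iff_isUnit_det _).mp hM'pd.isUnit
  have hinv : M' * M'⁻¹ = 1 := Matrix.mul_nonsing_inv _ hdet
  have h1πM' : (1 - π) * M' = 1 - π := by
    rw [hM'def, hMdef, Matrix.mul_add, Matrix.mul_add, Matrix.mul_smul, h1π2]
    have e1 : (1 - π) * (π * B * π) = 0 := by
      have : (1 - π) * π = 0 := by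
        rw [Matrix.sub_mul, Matrix.one_mul, hπ2, sub_self]
      rw [Matrix.mul_assoc π B π, ← Matrix.mul_assoc, this, Matrix.zero_mul]
    have e2 : (1 - π) * π = 0 := by
      rw [Matrix.sub_mul, Matrix.one_mul, hπ2, sub_self]
    rw [e1, e2, smul_zero]
    simp
  have h1πinv : (1 - π) * M'⁻¹ = 1 - π := by
    calc (1 - π) * M'⁻¹ = ((1 - π) * M') * M'⁻¹ := by rw [h1πM']
      _ = (1 - π) * (M' * M'⁻¹) := by rw [Matrix.mul_assoc]
      _ = 1 - π := by rw [hinv, Matrix.mul_one]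
  rintro y ⟨z, rfl⟩
  refine ⟨M'⁻¹ *ᵥ (π *ᵥ z), ?_⟩
  show M *ᵥ (M'⁻¹ *ᵥ (π *ᵥ z)) = π *ᵥ z
  have hM'x : M' *ᵥ (M'⁻¹ *ᵥ (π *ᵥ z)) = π *ᵥ z := by
    rw [mulVec_mulVec, hinv, one_mulVec]
  have h1πx : (1 - π) *ᵥ (M'⁻¹ *ᵥ (π *ᵥ z)) = 0 := by
    rw [mulVec_mulVec, h1πinv, mulVec_mulVec]
    have : (1 - π) * π = 0 := by
      rw [Matrix.sub_mul, Matrix.one_mul, hπ2, sub_self]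
    rw [this, zero_mulVec]
  have hMM' : M = M' - (1 - π) := by rw [hM'def]; abel
  rw [hMM', Matrix.sub_mulVec, hM'x, h1πx, sub_zero]

lemma K1_perturb {π B B' : Matrix (Fin n) (Fin n) ℂ} (hπh : π.IsHermitian) (hπ2 : π * π = π)
    (hBpsd : (π * B * π).PosSemidef) {t : ℝ} (ht : 0 < t)
    (h1 : π * B' * π = π * B * π + (t : ℂ) • π)
    (h2 : π * B' * (1 - π) = π * B * (1 - π)) :
    (π * B' * π).PosSemidef ∧
      LinearMap.range (π * B' * (1 - π)).mulVecLin ≤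
        LinearMap.range (π * B' * π).mulVecLin := by
  constructor
  · rw [h1]
    exact hBpsd.add (psd_smul (proj_psd hπh hπ2) (le_of_lt ht))
  · rw [h1, h2]
    refine le_trans ?_ (range_proj_le hπh hπ2 hBpsd ht)
    have e : π * B * (1 - π) = π * (B * (1 - π)) := by rw [Matrix.mul_assoc]
    rw [e, Matrix.mulVecLin_mul]
    exact LinearMap.range_comp_le_range _ _

section Closedness

lemma isClosed_psd_set (π : Matrix (Fin n) (Fin n) ℂ) (i : Fin n) :
    IsClosed {B : Fin n → Matrix (Fin n) (Fin n) ℂ | (π * B i * π).PosSemidef} := by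
  have hrw : {B : Fin n → Matrix (Fin n) (Fin n) ℂ | (π * B i * π).PosSemidef}
      = {B | (π * B i * π)ᴴ = π * B i * π} ∩
        ⋂ x : Fin n → ℂ, {B | 0 ≤ star x ⬝ᵥ (π * B i * π) *ᵥ x} := by
    ext B
    simp only [Set.mem_setOf_eq, Set.mem_inter_iff, Set.mem_iInter]
    exact posSemidef_iff_dotProduct_mulVec
  rw [hrw]
  have hcont : ∀ i, Continuous fun B : Fin n → Matrix (Fin n) (Fin n) ℂ => π * B i * π :=
    fun i => ((continuous_const.matrix_mul (continuous_apply i)).matrix_mul continuous_const)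
  apply IsClosed.inter
  · exact isClosed_eq ((hcont i).matrix_conjTranspose) (hcont i)
  · apply isClosed_iInter
    intro x
    have hc2 : Continuous fun B : Fin n → Matrix (Fin n) (Fin n) ℂ =>
        star x ⬝ᵥ (π * B i * π) *ᵥ x :=
      (continuous_const.dotProduct ((hcont i).matrix_mulVec continuous_const))
    have hset : {B : Fin n → Matrix (Fin n) (Fin n) ℂ | 0 ≤ star x ⬝ᵥ (π * B i * π) *ᵥ x}
        = (fun B : Fin n → Matrix (Fin n) (Fin n) ℂ => star x ⬝ᵥ (π * B i * π) *ᵥ x) ⁻¹'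
          {z : ℂ | 0 ≤ z} := rfl
    rw [hset]
    refine IsClosed.preimage hc2 ?_
    have : {z : ℂ | 0 ≤ z} = Complex.re ⁻¹' Set.Ici 0 ∩ Complex.im ⁻¹' {0} := by
      ext z
      simp only [Set.mem_setOf_eq, Set.mem_inter_iff, Set.mem_preimage, Set.mem_Ici,
        Set.mem_singleton_iff]
      rw [Complex.le_def]
      simp [eq_comm]
    rw [this]
    exact (isClosed_Ici.preimage Complex.continuous_re).inter
      (isClosed_singleton.preimage Complex.continuous_im)

lemma isClosed_herm_set (i : Fin n) :
    IsClosed {B : Fin n → Matrix (Fin n) (Fin n) ℂ | (B i).IsHermitian} :=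
  isClosed_eq ((continuous_apply i).matrix_conjTranspose) (continuous_apply i)

end Closedness

lemma range_mulVecLin_smul {X : Matrix (Fin n) (Fin n) ℂ} {c : ℂ} (hc : c ≠ 0) :
    LinearMap.range ((c • X).mulVecLin) = LinearMap.range X.mulVecLin := by
  have e : (c • X).mulVecLin = c • X.mulVecLin := by
    apply LinearMap.ext
    intro v
    simp [smul_mulVec]
  rw [e, LinearMap.range_smul _ c hc]

lemma πA_zero {A π : Matrix (Fin n) (Fin n) ℂ} (hA : A.IsHermitian) (hπ : π.IsHermitian)
    (h : A * π = 0) : π * A = 0 := by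
  have h2 := congrArg conjTranspose h
  simpa [conjTranspose_mul, hπ.eq, hA.eq] using h2

lemma part1 {n : ℕ} (A π : Fin n → Matrix (Fin n) (Fin n) ℂ)
    (hA : DoublyStochasticTuple A)
    (hπ : ∀ i, (π i).IsHermitian ∧ π i * π i = π i ∧ A i * π i = 0 ∧
      (A i + π i).PosDef) :
    K0 A = K1 π ∩ K3 := by
  obtain ⟨hApsd, hAtr, hAsum⟩ := hA
  have hπh := fun i => (hπ i).1
  have hπ2 := fun i => (hπ i).2.1
  have hAπ := fun i => (hπ i).2.2.1
  have hpd := fun i => (hπ i).2.2.2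
  have hπA : ∀ i, π i * A i = 0 := fun i => πA_zero (hApsd i).1 (hπh i) (hAπ i)
  ext Z
  constructor
  · rintro ⟨hZh, ε, hε, ⟨hDSpsd, hDStr, hDSsum⟩⟩
    have hεne : ((ε : ℂ)) ≠ 0 := Complex.ofReal_ne_zero.mpr hε.ne'
    constructor
    · refine ⟨hZh, fun i => ?_⟩
      set P : Matrix (Fin n) (Fin n) ℂ := A i + (ε : ℂ) • Z i with hPdef
      have hP : P.PosSemidef := hDSpsd i
      have hπP : π i * P = (ε : ℂ) • (π i * Z i) := by
        rw [hPdef, Matrix.mul_add, hπA i, Matrix.mul_smul, zero_add]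
      have e1 : π i * P * π i = (ε : ℂ) • (π i * Z i * π i) := by
        rw [hπP, Matrix.smul_mul]
      have e2 : π i * P * (1 - π i) = (ε : ℂ) • (π i * Z i * (1 - π i)) := by
        rw [hπP, Matrix.smul_mul]
      constructor
      · have hPSD2 : (π i * P * π i).PosSemidef := by
          have := hP.conjTranspose_mul_mul_same (π i)
          rwa [(hπh i).eq] at this
        have e3 : π i * Z i * π i = ((ε⁻¹ : ℝ) : ℂ) • (π i * P * π i) := by
          rw [e1, Complex.ofReal_inv, smul_smul, inv_mul_cancel₀ hεne, one_smul]
        rw [e3]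
        exact psd_smul hPSD2 (by positivity)
      · have r1 : LinearMap.range (π i * Z i * (1 - π i)).mulVecLin
            = LinearMap.range (π i * P * (1 - π i)).mulVecLin := by
          rw [e2, range_mulVecLin_smul hεne]
        have r2 : LinearMap.range (π i * Z i * π i).mulVecLin
            = LinearMap.range (π i * P * π i).mulVecLin := by
          rw [e1, range_mulVecLin_smul hεne]
        rw [r1, r2]
        exact psd_range_le hP (hπh i) (1 - π i)
    · refine ⟨hZh, fun i => ?_, ?_⟩
      · have h := hDStr i
        rw [trace_add, trace_smul, hAtr i] at h
        have h2 : (ε : ℂ) • (Z i).trace = 0 := by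
          have := congrArg (fun z => z - 1) h
          simpa using this
        rcases smul_eq_zero.mp h2 with h3 | h3
        · exact absurd h3 hεne
        · exact h3
      · have h : ∑ i, (A i + (ε : ℂ) • Z i) = 1 := hDSsum
        rw [Finset.sum_add_distrib, hAsum, ← Finset.smul_sum] at h
        have h2 : (ε : ℂ) • ∑ i, Z i = 0 := by
          have := congrArg (fun z => z - 1) h
          simpa using this
        rcases smul_eq_zero.mp h2 with h3 | h3
        · exact absurd h3 hεne
        · exact h3
  · rintro ⟨⟨hZh, hZK1⟩, ⟨_, hZtr, hZsum⟩⟩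
    refine ⟨hZh, ?_⟩
    have hkey := fun i => key_eps (hApsd i) (hπh i) (hπ2 i) (hAπ i) (hpd i) (hZh i)
      (hZK1 i).1 (hZK1 i).2
    choose ε hεpos hεP using hkey
    rcases isEmpty_or_nonempty (Fin n) with hemp | hne
    · refine ⟨1, one_pos, fun i => (hemp.elim i), fun i => (hemp.elim i), ?_⟩
      ext i j
      exact hemp.elim i
    · set ε0 := Finset.univ.inf' Finset.univ_nonempty ε with hε0
      have hε0pos : 0 < ε0 := by
        rw [hε0, Finset.lt_inf'_iff]
        exact fun i _ => hεpos i
      refine ⟨ε0, hε0pos, fun i => hεP i ε0 hε0pos (Finset.inf'_le _ (Finset.mem_univ i)),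
        fun i => ?_, ?_⟩
      · rw [trace_add, trace_smul, hAtr i, hZtr i, smul_zero, add_zero]
      · rw [Finset.sum_add_distrib, hAsum, ← Finset.smul_sum, hZsum, smul_zero, add_zero]

lemma isClosed_K2 {n : ℕ} (π : Fin n → Matrix (Fin n) (Fin n) ℂ) : IsClosed (K2 π) := by
  have hrw : K2 π = (⋂ i, {B : Fin n → Matrix (Fin n) (Fin n) ℂ | (B i).IsHermitian}) ∩
      ⋂ i, {B : Fin n → Matrix (Fin n) (Fin n) ℂ | (π i * B i * π i).PosSemidef} := by
    ext B
    simp only [K2, HermitianTuple, Set.mem_setOf_eq, Set.mem_inter_iff, Set.mem_iInter]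
  rw [hrw]
  exact (isClosed_iInter fun i => isClosed_herm_set i).inter
    (isClosed_iInter fun i => isClosed_psd_set (π i) i)

lemma isClosed_K3 {n : ℕ} : IsClosed (K3 (n := n)) := by
  have hrw : K3 (n := n) = (⋂ i, {B : Fin n → Matrix (Fin n) (Fin n) ℂ | (B i).IsHermitian}) ∩
      ((⋂ i, {B : Fin n → Matrix (Fin n) (Fin n) ℂ | (B i).trace = 0}) ∩
        {B : Fin n → Matrix (Fin n) (Fin n) ℂ | ∑ i, B i = 0}) := by
    ext B
    simp only [K3, HermitianTuple, Set.mem_setOf_eq, Set.mem_inter_iff, Set.mem_iInter]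
  rw [hrw]
  refine (isClosed_iInter fun i => isClosed_herm_set i).inter (IsClosed.inter ?_ ?_)
  · refine isClosed_iInter fun i => ?_
    exact isClosed_eq ((continuous_apply i).matrix_trace) continuous_const
  · exact isClosed_eq (continuous_finset_sum _ fun i _ => continuous_apply i) continuous_const

lemma tendsto_perturb {n : ℕ} (B D : Fin n → Matrix (Fin n) (Fin n) ℂ) :
    Filter.Tendsto (fun k : ℕ => fun i => B i + ((1 / ((k : ℝ) + 1) : ℝ) : ℂ) • D i)
      Filter.atTop (nhds B) := by
  rw [tendsto_pi_nhds]
  intro i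
  have h1 : Filter.Tendsto (fun k : ℕ => ((1 / ((k : ℝ) + 1) : ℝ) : ℂ)) Filter.atTop
      (nhds 0) := by
    have := tendsto_one_div_add_atTop_nhds_zero_nat (𝕜 := ℝ)
    have h2 := (Complex.continuous_ofReal.tendsto 0).comp this
    simpa [Function.comp_def, one_div] using h2
  have h3 : Filter.Tendsto (fun k : ℕ => ((1 / ((k : ℝ) + 1) : ℝ) : ℂ) • D i)
      Filter.atTop (nhds 0) := by
    have := h1.smul_const (D i)
    simpa using this
  have h4 := h3.const_add (B i)
  simpa using h4

lemma part2 {n : ℕ} (π : Fin n → Matrix (Fin n) (Fin n) ℂ)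
    (hπh : ∀ i, (π i).IsHermitian) (hπ2 : ∀ i, π i * π i = π i) :
    closure (K1 π) = K2 π := by
  apply Set.Subset.antisymm
  · apply closure_minimal
    · rintro B ⟨hBh, hB⟩
      exact ⟨hBh, fun i => (hB i).1⟩
    · exact isClosed_K2 π
  · rintro B ⟨hBh, hBpsd⟩
    apply mem_closure_of_tendsto (tendsto_perturb B π)
    apply Filter.Eventually.of_forall
    intro k
    have ht : (0:ℝ) < 1 / ((k : ℝ) + 1) := by positivity
    set t : ℝ := 1 / ((k : ℝ) + 1) with htdef
    refine ⟨fun i => (hBh i).add (herm_real_smul (hπh i) t), fun i => ?_⟩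
    have hB'1 : π i * (B i + (t : ℂ) • π i) * π i = π i * B i * π i + (t : ℂ) • π i := by
      rw [Matrix.mul_add, Matrix.mul_smul, hπ2 i, Matrix.add_mul, Matrix.smul_mul, hπ2 i]
    have hπ1 : π i * (1 - π i) = 0 := by
      rw [Matrix.mul_sub, Matrix.mul_one, hπ2 i, sub_self]
    have hB'2 : π i * (B i + (t : ℂ) • π i) * (1 - π i) = π i * B i * (1 - π i) := by
      rw [Matrix.mul_add, Matrix.mul_smul, hπ2 i, Matrix.add_mul, Matrix.smul_mul, hπ1,
        smul_zero, add_zero]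
    exact K1_perturb (hπh i) (hπ2 i) (hBpsd i) ht hB'1 hB'2

lemma part3 {n : ℕ} (A π : Fin n → Matrix (Fin n) (Fin n) ℂ)
    (hA : DoublyStochasticTuple A)
    (hπ : ∀ i, (π i).IsHermitian ∧ π i * π i = π i ∧ A i * π i = 0 ∧
      (A i + π i).PosDef) :
    closure (K0 A) = K2 π ∩ K3 := by
  have h1 := part1 A π hA hπ
  have h2 := part2 π (fun i => (hπ i).1) (fun i => (hπ i).2.1)
  rw [h1]
  apply Set.Subset.antisymm
  · intro B hB
    constructor
    · rw [← h2]
      exact closure_mono Set.inter_subset_left hB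
    · have h3 := closure_mono (Set.inter_subset_right (s := K1 π)) hB
      rwa [isClosed_K3.closure_eq] at h3
  · rintro B ⟨⟨hBh, hBpsd⟩, hB3⟩
    rcases isEmpty_or_nonempty (Fin n) with hemp | hne
    · exact subset_closure ⟨⟨hBh, fun i => hemp.elim i⟩, hB3⟩
    · obtain ⟨hBh3, hBtr, hBsum⟩ := hB3
      obtain ⟨hApsd, hAtr, hAsum⟩ := hA
      have hπh := fun i => (hπ i).1
      have hπ2 := fun i => (hπ i).2.1
      have hAπ := fun i => (hπ i).2.2.1
      have hπA : ∀ i, π i * A i = 0 := fun i => πA_zero (hApsd i).1 (hπh i) (hAπ i)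
      set Z0 : Fin n → Matrix (Fin n) (Fin n) ℂ := fun i => ((n : ℂ)⁻¹) • 1 - A i with hZ0
      have hnpos : 0 < n := Fin.pos_iff_nonempty.mpr hne
      have hn0 : (n : ℂ) ≠ 0 := Nat.cast_ne_zero.mpr hnpos.ne'
      have hncoe : ((n : ℂ))⁻¹ = (((n : ℝ)⁻¹ : ℝ) : ℂ) := by push_cast; ring
      have hZ0h : ∀ i, (Z0 i).IsHermitian := by
        intro i
        have hh1 : (((n : ℂ)⁻¹) • (1 : Matrix (Fin n) (Fin n) ℂ)).IsHermitian := by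
          rw [hncoe]
          exact herm_real_smul Matrix.isHermitian_one _
        exact hh1.sub (hApsd i).1
      apply mem_closure_of_tendsto (tendsto_perturb B Z0)
      apply Filter.Eventually.of_forall
      intro k
      have ht : (0:ℝ) < 1 / ((k : ℝ) + 1) := by positivity
      set t : ℝ := 1 / ((k : ℝ) + 1) with htdef
      constructor
      · -- K1 membership
        refine ⟨fun i => (hBh i).add (herm_real_smul (hZ0h i) t), fun i => ?_⟩
        have hπZ0 : π i * Z0 i = (n : ℂ)⁻¹ • π i := by
          rw [hZ0]
          show π i * ((n : ℂ)⁻¹ • 1 - A i) = (n : ℂ)⁻¹ • π i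
          rw [Matrix.mul_sub, Matrix.mul_smul, Matrix.mul_one, hπA i, sub_zero]
        have hπ1 : π i * (1 - π i) = 0 := by
          rw [Matrix.mul_sub, Matrix.mul_one, hπ2 i, sub_self]
        have hB'1 : π i * (B i + (t : ℂ) • Z0 i) * π i
            = π i * B i * π i + ((t * (n : ℝ)⁻¹ : ℝ) : ℂ) • π i := by
          rw [Matrix.mul_add, Matrix.mul_smul, hπZ0, Matrix.add_mul, Matrix.smul_mul,
            Matrix.smul_mul, hπ2 i]
          congr 1
          rw [smul_smul, hncoe]
          push_cast
          ring_nf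
        have hB'2 : π i * (B i + (t : ℂ) • Z0 i) * (1 - π i) = π i * B i * (1 - π i) := by
          rw [Matrix.mul_add, Matrix.mul_smul, hπZ0, Matrix.add_mul, Matrix.smul_mul,
            Matrix.smul_mul, hπ1, smul_zero, smul_zero, add_zero]
        have htn : (0:ℝ) < t * (n : ℝ)⁻¹ := by positivity
        exact K1_perturb (hπh i) (hπ2 i) (hBpsd i) htn hB'1 hB'2
      · -- K3 membership
        refine ⟨fun i => (hBh i).add (herm_real_smul (hZ0h i) t), fun i => ?_, ?_⟩
        · rw [trace_add, trace_smul, hBtr i]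
          have hz : (Z0 i).trace = 0 := by
            rw [hZ0]
            show (((n : ℂ)⁻¹) • (1 : Matrix (Fin n) (Fin n) ℂ) - A i).trace = 0
            rw [trace_sub, trace_smul, trace_one, hAtr i]
            simp only [Fintype.card_fin, smul_eq_mul]
            rw [inv_mul_cancel₀ hn0, sub_self]
          rw [hz, smul_zero, zero_add]
        · show (∑ i, (B i + (t : ℂ) • Z0 i)) = 0
          rw [Finset.sum_add_distrib, hBsum, ← Finset.smul_sum]
          have hz : ∑ i, Z0 i = 0 := by
            rw [hZ0]
            show (∑ i, (((n : ℂ)⁻¹) • (1 : Matrix (Fin n) (Fin n) ℂ) - A i)) = 0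
            rw [Finset.sum_sub_distrib, hAsum, Finset.sum_const, Finset.card_univ,
              Fintype.card_fin]
            have hns : (n : ℕ) • (((n : ℂ)⁻¹) • (1 : Matrix (Fin n) (Fin n) ℂ))
                = (n : ℂ) • (((n : ℂ)⁻¹) • (1 : Matrix (Fin n) (Fin n) ℂ)) :=
              (Nat.cast_smul_eq_nsmul ℂ n _).symm
            rw [hns, smul_smul, mul_inv_cancel₀ hn0, one_smul, sub_self]
          rw [hz, smul_zero, add_zero]

/-- For a doubly stochastic tuple `A`, with `π i` the orthogonal projection onto `Ker (A i)`
(so block decompositions are with respect to `ℂⁿ = Im (A i) ⊕ Ker (A i)`):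
(1) `K₀ = K₁ ∩ K₃`; (2) `closure K₁ = K₂`; (3) `closure K₀ = K₂ ∩ K₃`. -/
theorem admissible_cone_description {n : ℕ}
    (A π : Fin n → Matrix (Fin n) (Fin n) ℂ)
    (hA : DoublyStochasticTuple A)
    (hπ : ∀ i, (π i).IsHermitian ∧ π i * π i = π i ∧ A i * π i = 0 ∧
      (A i + π i).PosDef) :
    K0 A = K1 π ∩ K3 ∧
    closure (K1 π) = K2 π ∧
    closure (K0 A) = K2 π ∩ K3 :=
  ⟨part1 A π hA hπ, part2 π (fun i => (hπ i).1) (fun i => (hπ i).2.1), part3 A π hA hπ⟩
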